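/- Let μ be a probability distribution of (X, Y) on [1,∞) × ℝ^{d-1}. Then the following are equivalent: (a) μ is homogeneous of order −α with respect to its first component, i.e. μ(λA × B) = λ^{−α} μ(A × B) for all λ ≥ 1 and Borel sets A ⊆ [1,∞), B ⊆ ℝ^{d-1}; (b) X and Y are independent and X has the Pareto distribution with survival function x^{−α}. -/

import Mathlib

open Filter Topology MeasureTheory

/-- The Pareto distribution on `[1,∞)` with shape `α`, given by its density
`α x^{−α−1}` on `[1,∞)`; its survival function is `x^{−α}`. -/
noncomputable def paretoLaw (α : ℝ) : Measure ℝ :=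
  MeasureTheory.volume.withDensity fun x =>
    ENNReal.ofReal (Set.indicator (Set.Ici 1) (fun x => α * x ^ (-α - 1)) x)

lemma paretoLaw_apply (α : ℝ) {s : Set ℝ} (hs : MeasurableSet s) :
    paretoLaw α s = ∫⁻ x in s ∩ Set.Ici 1, ENNReal.ofReal (α * x ^ (-α - 1)) := by
  rw [paretoLaw, withDensity_apply _ hs]
  have hfun : (fun x => ENNReal.ofReal
        (Set.indicator (Set.Ici 1) (fun x => α * x ^ (-α - 1)) x))
      = Set.indicator (Set.Ici 1) (fun x => ENNReal.ofReal (α * x ^ (-α - 1))) := by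
    ext x
    by_cases hx : x ∈ Set.Ici (1 : ℝ) <;> simp [hx]
  rw [hfun, lintegral_indicator measurableSet_Ici, Measure.restrict_restrict measurableSet_Ici,
    Set.inter_comm]

lemma lint_pareto_Ici {α : ℝ} (hα : 0 < α) {c : ℝ} (hc : 0 < c) :
    ∫⁻ x in Set.Ici c, ENNReal.ofReal (α * x ^ (-α - 1)) = ENNReal.ofReal (c ^ (-α)) := by
  rw [← setLIntegral_congr (Ioi_ae_eq_Ici (a := c))]
  have hint : IntegrableOn (fun x => α * x ^ (-α - 1)) (Set.Ioi c) :=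
    (integrableOn_Ioi_rpow_of_lt (by linarith) hc).const_mul α
  have hnn : 0 ≤ᵐ[MeasureTheory.volume.restrict (Set.Ioi c)]
      (fun x : ℝ => α * x ^ (-α - 1)) := by
    filter_upwards [ae_restrict_mem measurableSet_Ioi] with x hx
    have hx0 : 0 < x := lt_trans hc hx
    positivity
  rw [← ofReal_integral_eq_lintegral_ofReal hint hnn]
  congr 1
  rw [MeasureTheory.integral_const_mul, integral_Ioi_rpow_of_lt (by linarith) hc]
  have h1 : (-α - 1) + 1 = -α := by ring
  rw [h1]
  field_simp

lemma paretoLaw_Ici {α : ℝ} (hα : 0 < α) (a : ℝ) :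
    paretoLaw α (Set.Ici a) = ENNReal.ofReal ((max a 1) ^ (-α)) := by
  rw [paretoLaw_apply α measurableSet_Ici, Set.Ici_inter_Ici,
    lint_pareto_Ici hα (lt_of_lt_of_le one_pos (le_max_right a 1))]

lemma paretoLaw_isProbabilityMeasure {α : ℝ} (hα : 0 < α) :
    IsProbabilityMeasure (paretoLaw α) := by
  constructor
  rw [paretoLaw_apply α MeasurableSet.univ, Set.univ_inter, lint_pareto_Ici hα one_pos,
    Real.one_rpow, ENNReal.ofReal_one]

lemma image_const_mul' {lam : ℝ} (hlam : 0 < lam) (A : Set ℝ) :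
    (fun a => lam * a) '' A = (fun x => lam⁻¹ * x) ⁻¹' A := by
  ext x
  constructor
  · rintro ⟨a, ha, rfl⟩
    simpa [inv_mul_cancel_left₀ hlam.ne'] using ha
  · intro hx
    exact ⟨lam⁻¹ * x, hx, mul_inv_cancel_left₀ hlam.ne' x⟩

lemma paretoLaw_image {α : ℝ} (hα : 0 < α) {lam : ℝ} (hlam : 1 ≤ lam) {A : Set ℝ}
    (hA : MeasurableSet A) (hA1 : A ⊆ Set.Ici 1) :
    paretoLaw α ((fun a => lam * a) '' A) = ENNReal.ofReal (lam ^ (-α)) * paretoLaw α A := by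
  have hlam0 : 0 < lam := lt_of_lt_of_le one_pos hlam
  have himg : (fun a => lam * a) '' A = (fun x => lam⁻¹ * x) ⁻¹' A := image_const_mul' hlam0 A
  have hmeas : MeasurableSet ((fun a => lam * a) '' A) := by
    rw [himg]; exact hA.preimage (measurable_const_mul _)
  have hsub : (fun a => lam * a) '' A ⊆ Set.Ici 1 := by
    rintro x ⟨a, ha, rfl⟩
    have h1a : (1 : ℝ) ≤ a := hA1 ha
    have : (1 : ℝ) ≤ lam * a := by nlinarith
    exact this
  set g : ℝ → ENNReal := fun x => ENNReal.ofReal (α * x ^ (-α - 1)) with hg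
  have hgmeas : Measurable g := by
    apply Measurable.ennreal_ofReal
    fun_prop
  have h2 : ∀ y, Set.indicator ((fun a => lam * a) '' A) g (lam * y)
      = Set.indicator A (fun y => g (lam * y)) y := by
    intro y
    by_cases hy : y ∈ A
    · rw [Set.indicator_of_mem hy, Set.indicator_of_mem (Set.mem_image_of_mem _ hy)]
    · rw [Set.indicator_of_notMem hy, Set.indicator_of_notMem]
      rintro ⟨a, ha, hax⟩
      exact hy (by rwa [mul_left_cancel₀ hlam0.ne' hax] at ha)
  have h3 : ∫⁻ y in A, g (lam * y) ∂MeasureTheory.volume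
      = ENNReal.ofReal (lam ^ (-α - 1)) * ∫⁻ y in A, g y ∂MeasureTheory.volume := by
    rw [← lintegral_const_mul' _ _ ENNReal.ofReal_ne_top]
    refine setLIntegral_congr_fun hA ?_
    intro y hy
    have hy1 : (1 : ℝ) ≤ y := hA1 hy
    have hy0 : (0 : ℝ) < y := lt_of_lt_of_le one_pos hy1
    show g (lam * y) = ENNReal.ofReal (lam ^ (-α - 1)) * g y
    rw [hg]
    simp only
    rw [Real.mul_rpow hlam0.le hy0.le, show α * (lam ^ (-α - 1) * y ^ (-α - 1))
        = lam ^ (-α - 1) * (α * y ^ (-α - 1)) by ring,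
      ENNReal.ofReal_mul (Real.rpow_nonneg hlam0.le _)]
  have hpow : ENNReal.ofReal |lam| * ENNReal.ofReal (lam ^ (-α - 1))
      = ENNReal.ofReal (lam ^ (-α)) := by
    rw [abs_of_pos hlam0, ← ENNReal.ofReal_mul hlam0.le]
    congr 1
    nth_rewrite 1 [← Real.rpow_one lam]
    rw [← Real.rpow_add hlam0]
    ring_nf
  calc paretoLaw α ((fun a => lam * a) '' A)
      = ∫⁻ x in (fun a => lam * a) '' A, g x ∂MeasureTheory.volume := by
        rw [paretoLaw_apply α hmeas, Set.inter_eq_self_of_subset_left hsub]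
    _ = ∫⁻ x, Set.indicator ((fun a => lam * a) '' A) g x ∂MeasureTheory.volume :=
        (lintegral_indicator hmeas g).symm
    _ = ∫⁻ x, Set.indicator ((fun a => lam * a) '' A) g x
          ∂(ENNReal.ofReal |lam| • Measure.map (fun a => lam * a) MeasureTheory.volume) := by
        rw [Real.smul_map_volume_mul_left hlam0.ne']
    _ = ENNReal.ofReal |lam| * ∫⁻ x, Set.indicator ((fun a => lam * a) '' A) g x
          ∂(Measure.map (fun a => lam * a) MeasureTheory.volume) := lintegral_smul_measure _ _
    _ = ENNReal.ofReal |lam| * ∫⁻ y, Set.indicator ((fun a => lam * a) '' A) g (lam * y)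
          ∂MeasureTheory.volume := by
        rw [lintegral_map (hgmeas.indicator hmeas) (measurable_const_mul lam)]
    _ = ENNReal.ofReal |lam| * ∫⁻ y, Set.indicator A (fun y => g (lam * y)) y
          ∂MeasureTheory.volume := by simp only [h2]
    _ = ENNReal.ofReal |lam| * ∫⁻ y in A, g (lam * y) ∂MeasureTheory.volume := by
        rw [lintegral_indicator hA]
    _ = ENNReal.ofReal |lam| * (ENNReal.ofReal (lam ^ (-α - 1))
          * ∫⁻ y in A, g y ∂MeasureTheory.volume) := by rw [h3]
    _ = ENNReal.ofReal (lam ^ (-α)) * paretoLaw α A := by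
        rw [← mul_assoc, hpow, paretoLaw_apply α hA, Set.inter_eq_self_of_subset_left hA1]

/-- Homogeneous distributions: a probability distribution `μ` of `(X,Y)` on
`[1,∞) × ℝ^{d-1}` is homogeneous of order `−α` w.r.t. its first component, i.e.
`μ(λA × B) = λ^{−α} μ(A × B)` for all `λ ≥ 1` and Borel `A ⊆ [1,∞)`, `B`, if and only if
`X ⟂ Y` with `X` Pareto(α)-distributed, i.e. `μ = P_α × μ_Y`. -/
theorem homogeneous_iff_pareto_product {m : ℕ} (α : ℝ) (hα : 0 < α)
    (μ : Measure (ℝ × (Fin m → ℝ))) [IsProbabilityMeasure μ]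
    (hsupp : μ ((Set.Ici (1:ℝ)) ×ˢ (Set.univ : Set (Fin m → ℝ)))ᶜ = 0) :
    (∀ lam : ℝ, 1 ≤ lam →
      ∀ A : Set ℝ, MeasurableSet A → A ⊆ Set.Ici 1 →
      ∀ B : Set (Fin m → ℝ), MeasurableSet B →
        μ (((fun a => lam * a) '' A) ×ˢ B) =
          ENNReal.ofReal (lam ^ (-α)) * μ (A ×ˢ B))
    ↔ μ = (paretoLaw α).prod (μ.map Prod.snd) := by
  haveI : IsProbabilityMeasure (paretoLaw α) := paretoLaw_isProbabilityMeasure hα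
  haveI : IsProbabilityMeasure (μ.map Prod.snd) :=
    Measure.isProbabilityMeasure_map measurable_snd.aemeasurable
  constructor
  · intro h
    set ν := μ.map Prod.snd with hν
    have hνapp : ∀ B : Set (Fin m → ℝ), MeasurableSet B → ν B = μ (Set.univ ×ˢ B) := by
      intro B hB
      rw [hν, Measure.map_apply measurable_snd hB]
      congr 1
      ext ⟨x, y⟩
      simp
    have hIci1 : ∀ B : Set (Fin m → ℝ), MeasurableSet B → μ (Set.Ici 1 ×ˢ B) = ν B := by
      intro B hB
      rw [hνapp B hB]
      have e : Set.Ici (1:ℝ) ×ˢ B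
          = (Set.univ ×ˢ B) ∩ (Set.Ici (1:ℝ) ×ˢ (Set.univ : Set (Fin m → ℝ))) := by
        rw [Set.prod_inter_prod]
        simp
      rw [e, measure_inter_conull hsupp]
    have key : ∀ B : Set (Fin m → ℝ), MeasurableSet B → ∀ a : ℝ,
        μ (Set.Ici a ×ˢ B) = ENNReal.ofReal ((max a 1) ^ (-α)) * ν B := by
      intro B hB a
      set c := max a 1 with hc
      have hc1 : (1 : ℝ) ≤ c := le_max_right a 1
      have hc0 : (0 : ℝ) < c := lt_of_lt_of_le one_pos hc1
      have e1 : (Set.Ici a ×ˢ B) ∩ (Set.Ici (1:ℝ) ×ˢ (Set.univ : Set (Fin m → ℝ)))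
          = Set.Ici c ×ˢ B := by
        rw [Set.prod_inter_prod, Set.Ici_inter_Ici]
        simp [hc, max_def]
      have h1 : μ (Set.Ici a ×ˢ B) = μ (Set.Ici c ×ˢ B) := by
        rw [← e1, measure_inter_conull hsupp]
      have himg : (fun x => c * x) '' Set.Ici 1 = Set.Ici c := by
        rw [image_const_mul' hc0, Set.preimage_const_mul_Ici₀ _ (inv_pos.mpr hc0),
          one_div, inv_inv]
      have h2 := h c hc1 (Set.Ici 1) measurableSet_Ici subset_rfl B hB
      rw [himg, hIci1 B hB] at h2
      rw [h1, h2]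
    have rect : ∀ A : Set ℝ, MeasurableSet A → ∀ B : Set (Fin m → ℝ), MeasurableSet B →
        μ (A ×ˢ B) = paretoLaw α A * ν B := by
      intro A hA B hB
      set ρ := Measure.map Prod.fst (μ.restrict (Set.univ ×ˢ B)) with hρ
      have hρapp : ∀ s : Set ℝ, MeasurableSet s → ρ s = μ (s ×ˢ B) := by
        intro s hs
        rw [hρ, Measure.map_apply measurable_fst hs,
          Measure.restrict_apply (hs.preimage measurable_fst)]
        congr 1
        ext ⟨x, y⟩
        simp
      haveI : IsFiniteMeasure ρ := by
        constructor
        rw [hρapp _ MeasurableSet.univ]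
        exact measure_lt_top μ _
      have hext : ρ = ν B • paretoLaw α := by
        apply Measure.ext_of_Ici
        intro x
        rw [hρapp _ measurableSet_Ici, key B hB x, Measure.smul_apply, smul_eq_mul,
          paretoLaw_Ici hα, mul_comm]
      have hA' := hρapp A hA
      rw [hext, Measure.smul_apply, smul_eq_mul] at hA'
      rw [← hA', mul_comm]
    exact (Measure.prod_eq fun s t hs ht => rect s hs t ht).symm
  · intro h lam hlam A hA hA1 B hB
    rw [h, Measure.prod_prod, Measure.prod_prod, paretoLaw_image hα hlam hA hA1, mul_assoc]
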